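/- Let p be a prime with p^m ≡ 2 (mod 3), let δ̃ = δ̃_0 + uδ̃_1 + u²δ̃_2 ∈ R³ be a unit with δ̃_1 ≠ 0, and let δ̃_{0,0} be the unique element of F with δ̃_{0,0}^{p^s} = δ̃_0. Then for each 0 ≤ i ≤ 3p^s − 1, the ideal ⟨(x² + δ̃_{0,0}x + δ̃_{0,0}²)^i⟩ of T = R³[x]/⟨x^{2p^s} + δ̃x^{p^s} + δ̃²⟩ has exactly (p^{2m})^{3p^s − i} elements. -/

import Mathlib

open Polynomial

/-- The finite chain ring `R^t = 𝔽_{p^m}[u]/⟨u^t⟩`. -/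
abbrev Rt (p m t : ℕ) [Fact p.Prime] : Type _ :=
  Polynomial (GaloisField p m) ⧸ Ideal.span {(X : Polynomial (GaloisField p m)) ^ t}

noncomputable instance (p m t : ℕ) [Fact p.Prime] : CommRing (Rt p m t) :=
  Ideal.Quotient.commRing _

/-- The canonical projection `𝔽_{p^m}[u] → R^t`. -/
noncomputable def mkRt (p m t : ℕ) [Fact p.Prime] :
    Polynomial (GaloisField p m) →+* Rt p m t :=
  Ideal.Quotient.mk _

/-- The element `u ∈ R^t`. -/
noncomputable def uRt (p m t : ℕ) [Fact p.Prime] : Rt p m t := mkRt p m t X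

/-- The canonical embedding `𝔽_{p^m} → R^t`. -/
noncomputable def κ (p m t : ℕ) [Fact p.Prime] : GaloisField p m →+* Rt p m t :=
  (mkRt p m t).comp (C : GaloisField p m →+* Polynomial (GaloisField p m))

/-- The quotient ring `R^t[x]/⟨x^N − δ⟩`. -/
abbrev Qr (p m t : ℕ) [Fact p.Prime] (N : ℕ) (δ : Rt p m t) : Type _ :=
  Polynomial (Rt p m t) ⧸ Ideal.span {(X : Polynomial (Rt p m t)) ^ N - C δ}

/-- The canonical projection `R^t[x] → R^t[x]/⟨x^N − δ⟩`. -/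
noncomputable def mkQr (p m t : ℕ) [Fact p.Prime] (N : ℕ) (δ : Rt p m t) :
    Polynomial (Rt p m t) →+* Qr p m t N δ :=
  Ideal.Quotient.mk _


lemma adjoinRoot_card {R : Type*} [CommRing R] [Finite R] {g : R[X]} (hg : g.Monic) :
    Nat.card (AdjoinRoot g) = Nat.card R ^ g.natDegree := by
  have e := (AdjoinRoot.powerBasis' hg).basis.equivFun
  rw [Nat.card_congr e.toEquiv]
  simp [Nat.card_fun, Nat.card_eq_fintype_card]

lemma adjoinRoot_finite {R : Type*} [CommRing R] [Finite R] {g : R[X]} (hg : g.Monic) :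
    Finite (AdjoinRoot g) :=
  Finite.of_equiv _ (AdjoinRoot.powerBasis' hg).basis.equivFun.toEquiv.symm

lemma squeeze (P M : ℕ) (hP : 0 < P) (n : ℕ → ℕ)
    (h0 : n 0 = P ^ M) (hM : n M = 1)
    (hstep : ∀ i, n i ≤ P * n (i + 1)) :
    ∀ i ≤ M, n i = P ^ (M - i) := by
  have chain1 : ∀ i, n 0 ≤ P ^ i * n i := by
    intro i; induction i with
    | zero => simp
    | succ i ih =>
      calc n 0 ≤ P ^ i * n i := ih
        _ ≤ P ^ i * (P * n (i + 1)) := Nat.mul_le_mul_left _ (hstep i)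
        _ = P ^ (i + 1) * n (i + 1) := by ring
  have chain2 : ∀ j, j ≤ M → n (M - j) ≤ P ^ j := by
    intro j; induction j with
    | zero => intro _; simp [hM]
    | succ j ih =>
      intro hj
      have hj' : j ≤ M := Nat.le_of_succ_le hj
      have e1 : M - j = (M - (j + 1)) + 1 := by omega
      calc n (M - (j + 1)) ≤ P * n (M - (j + 1) + 1) := hstep _
        _ = P * n (M - j) := by rw [← e1]
        _ ≤ P * P ^ j := Nat.mul_le_mul_left _ (ih hj')
        _ = P ^ (j + 1) := by ring
  intro i hi
  have h1 : P ^ M ≤ P ^ i * n i := h0 ▸ chain1 i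
  have h2 : n i ≤ P ^ (M - i) := by
    have := chain2 (M - i) (Nat.sub_le _ _)
    rwa [Nat.sub_sub_self hi] at this
  have h4 : P ^ i * n i = P ^ i * P ^ (M - i) := by
    have h3 : P ^ i * n i ≤ P ^ M := by
      calc P ^ i * n i ≤ P ^ i * P ^ (M - i) := Nat.mul_le_mul_left _ h2
        _ = P ^ M := by rw [← pow_add]; congr 1; omega
    rw [← pow_add]
    have : i + (M - i) = M := by omega
    rw [this]; omega
  exact Nat.eq_of_mul_eq_mul_left (pow_pos hP i) h4

set_option maxHeartbeats 1600000 in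
set_option synthInstance.maxHeartbeats 400000 in
private lemma key_gen {F R : Type*} [Field F] [Finite F] [CommRing R] [Nontrivial R] [Finite R]
    (κ' : F →+* R) (p s : ℕ) [Fact p.Prime] [CharP R p]
    (hcard : Nat.card R = Nat.card F ^ 3)
    (u w : R) (hu3 : u ^ 3 = 0) (hw : IsUnit w)
    (hrepr : ∀ r : R, ∃ c r', r = κ' c + u * r')
    (hUnitR : ∀ c : F, c ≠ 0 → ∀ r' : R, IsUnit (κ' c + u * r'))
    (h3 : (3 : F) ≠ 0) (b : F) (hb : b ≠ 0)
    (δ : R) (hδ : δ = κ' (b ^ p ^ s) + u * w) :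
    ∀ i ≤ 3 * p ^ s,
      Nat.card (Ideal.span {(Ideal.Quotient.mk
          (Ideal.span {(X : R[X]) ^ (2 * p ^ s) + C δ * X ^ p ^ s + C (δ ^ 2)})
          (X ^ 2 + C (κ' b) * X + C (κ' b ^ 2))) ^ i}) =
        Nat.card F ^ (2 * (3 * p ^ s - i)) := by
  have hp : 1 < p := (Fact.out : p.Prime).one_lt
  haveI : CharP R[X] p := charP_of_injective_ringHom (C_injective (R := R)) p
  set N := p ^ s with hNdef
  have hN : 0 < N := pow_pos (by omega) s
  set π : R[X] →+* _ :=
    Ideal.Quotient.mk (Ideal.span {(X : R[X]) ^ (2 * N) + C δ * X ^ N + C (δ ^ 2)}) with hπ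
  set g : R[X] := X ^ 2 + C (κ' b) * X + C (κ' b ^ 2) with hgdef
  -- monicity / degree / finiteness
  have hfm : ((X : R[X]) ^ (2 * N) + C δ * X ^ N + C (δ ^ 2)).Monic := by
    monicity!
    simp [show N ≤ 2 * N by omega, show ¬(2 * N ≤ N) by omega, hN.ne']
  have hdeg : ((X : R[X]) ^ (2 * N) + C δ * X ^ N + C (δ ^ 2)).natDegree = 2 * N := by
    compute_degree!
    · simp [show N ≤ 2 * N by omega, show ¬(2 * N ≤ N) by omega, hN.ne']
    all_goals omega
  haveI hTfin : Finite (R[X] ⧸ Ideal.span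
      {(X : R[X]) ^ (2 * N) + C δ * X ^ N + C (δ ^ 2)}) := adjoinRoot_finite hfm
  -- relation from f
  have hfT : π ((X : R[X]) ^ (2 * N) + C δ * X ^ N + C (δ ^ 2)) = 0 :=
    Ideal.Quotient.eq_zero_iff_mem.mpr (Ideal.subset_span rfl)
  have hx2 : π X ^ (2 * N) + π (C δ) * π X ^ N + π (C δ) ^ 2 = 0 := by
    simp only [map_add, map_mul, map_pow] at hfT
    exact hfT
  -- expansion of g
  have hg2 : π g = π X ^ 2 + π (C (κ' b)) * π X + π (C (κ' b)) ^ 2 := by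
    rw [hgdef]; simp only [map_add, map_mul, map_pow]
  -- Frobenius
  have frob : g ^ N = X ^ (2 * N) + C (κ' b ^ N) * X ^ N + C ((κ' b ^ N) ^ 2) := by
    have e1 : ((X : R[X]) ^ 2) ^ N = X ^ (2 * N) := (pow_mul X 2 N).symm
    have e2 : (C (κ' b) * X : R[X]) ^ N = C (κ' b ^ N) * X ^ N := by
      rw [mul_pow, ← C_pow]
    have e3 : (C (κ' b ^ 2) : R[X]) ^ N = C ((κ' b ^ N) ^ 2) := by
      rw [← C_pow, ← pow_mul, mul_comm 2 N, pow_mul]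
    rw [hNdef] at e1 e2 e3
    rw [hgdef, hNdef]
    rw [add_pow_expChar_pow, add_pow_expChar_pow, e1, e2, e3]
  have hGN : π g ^ N = (π (C (κ' b)) ^ N - π (C δ))
      * (π X ^ N + π (C (κ' b)) ^ N + π (C δ)) := by
    have h1 := congrArg π frob
    simp only [map_add, map_mul, map_pow] at h1
    rw [hg2]
    rw [hg2] at h1
    linear_combination h1 + hx2
  -- delta minus its residue
  have hδC : π (C δ) = π (C (κ' b)) ^ N + π (C u) * π (C w) := by
    have h := congrArg (fun r : R => π (C r)) hδ
    simp only [map_add, map_mul, map_pow] at h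
    exact h
  have hAD : π (C (κ' b)) ^ N - π (C δ) = -(π (C u) * π (C w)) := by
    linear_combination -hδC
  have hcu3 : π (C u) ^ 3 = 0 := by
    rw [← map_pow, ← map_pow, hu3, map_zero, map_zero]
  have hG3 : π g ^ (3 * N) = 0 := by
    have hA3 : (π (C (κ' b)) ^ N - π (C δ)) ^ 3 = 0 := by
      rw [hAD]
      linear_combination (-(π (C w)) ^ 3) * hcu3
    have hsplit : π g ^ (3 * N) = (π g ^ N) ^ 3 := by
      rw [show 3 * N = N * 3 from mul_comm 3 N]; exact pow_mul _ _ _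
    rw [hsplit, hGN, mul_pow, hA3, zero_mul]
  -- the second factor is a unit
  have hzR : IsUnit ((κ' b ^ N) ^ 2 + κ' b ^ N * δ + δ ^ 2 : R) := by
    have hz : ((κ' b ^ N) ^ 2 + κ' b ^ N * δ + δ ^ 2 : R)
        = κ' (3 * (b ^ N) ^ 2) + u * (3 * κ' (b ^ N) * w + u * w ^ 2) := by
      rw [hδ]
      simp only [map_mul, map_pow, map_ofNat]
      ring
    rw [hz]
    exact hUnitR _ (mul_ne_zero h3 (pow_ne_zero _ (pow_ne_zero _ hb))) _
  obtain ⟨zu, hzu⟩ := hzR.map (π.comp (C : R →+* R[X]))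
  simp only [RingHom.comp_apply] at hzu
  simp only [map_add, map_mul, map_pow] at hzu
  have hvz : (π X ^ N + π (C (κ' b)) ^ N + π (C δ)) * (π X ^ N - π (C (κ' b)) ^ N)
      = -((π (C (κ' b)) ^ N) ^ 2 + π (C (κ' b)) ^ N * π (C δ) + π (C δ) ^ 2) := by
    linear_combination hx2
  have hzinv : ((π (C (κ' b)) ^ N) ^ 2 + π (C (κ' b)) ^ N * π (C δ) + π (C δ) ^ 2)
      * ↑zu⁻¹ = 1 := by
    rw [← hzu]; exact Units.mul_inv zu
  have hvT : IsUnit (π X ^ N + π (C (κ' b)) ^ N + π (C δ)) := by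
    refine IsUnit.of_mul_eq_one (-(π X ^ N - π (C (κ' b)) ^ N) * ↑zu⁻¹) ?_
    linear_combination (-(↑zu⁻¹ : _)) * hvz + hzinv
  obtain ⟨vu, hvu⟩ := hvT
  have hv1 : (π X ^ N + π (C (κ' b)) ^ N + π (C δ)) * ↑vu⁻¹ = 1 := by
    rw [← hvu]; exact Units.mul_inv vu
  obtain ⟨wu, hwu⟩ := hw.map (π.comp (C : R →+* R[X]))
  simp only [RingHom.comp_apply] at hwu
  have hw1 : π (C w) * ↑wu⁻¹ = 1 := by rw [← hwu]; exact Units.mul_inv wu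
  -- u lies in the ideal generated by g
  have hu_mem : π (C u) ∈ Ideal.span {π g} := by
    rw [Ideal.mem_span_singleton]
    refine dvd_trans (dvd_pow_self _ hN.ne') ⟨-(↑vu⁻¹ * ↑wu⁻¹), ?_⟩
    have h5 : π (C u) * (π (C w) * ↑wu⁻¹)
        * ((π X ^ N + π (C (κ' b)) ^ N + π (C δ)) * ↑vu⁻¹)
        = π g ^ N * (-(↑vu⁻¹ * ↑wu⁻¹)) := by
      rw [hGN, hAD]; ring
    rw [hw1, hv1, mul_one, mul_one] at h5
    exact h5
  -- spanning: every element is a x + c modulo ⟨g⟩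
  have span2 : ∀ t : R[X] ⧸ Ideal.span {(X : R[X]) ^ (2 * N) + C δ * X ^ N + C (δ ^ 2)},
      ∃ a c : F, t - (π (C (κ' a)) * π X + π (C (κ' c))) ∈ Ideal.span {π g} := by
    intro t
    obtain ⟨q, rfl⟩ := Ideal.Quotient.mk_surjective t
    rw [← hπ]
    induction q using Polynomial.induction_on with
    | C r =>
      obtain ⟨c, r', hr⟩ := hrepr r
      refine ⟨0, c, ?_⟩
      have heq : π (C r) - (π (C (κ' 0)) * π X + π (C (κ' c)))
          = π (C u) * π (C r') := by
        rw [hr]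
        simp only [map_add, map_mul, map_zero]
        ring
      rw [heq]
      exact Ideal.mul_mem_right _ _ hu_mem
    | add q1 q2 h1 h2 =>
      obtain ⟨a1, c1, h1⟩ := h1
      obtain ⟨a2, c2, h2⟩ := h2
      refine ⟨a1 + a2, c1 + c2, ?_⟩
      have heq : π (q1 + q2) - (π (C (κ' (a1 + a2))) * π X + π (C (κ' (c1 + c2))))
          = (π q1 - (π (C (κ' a1)) * π X + π (C (κ' c1))))
            + (π q2 - (π (C (κ' a2)) * π X + π (C (κ' c2)))) := by
        simp only [map_add]
        ring
      rw [heq]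
      exact Ideal.add_mem _ h1 h2
    | monomial n r h =>
      obtain ⟨a, c, hs⟩ := h
      refine ⟨c - a * b, -(a * b ^ 2), ?_⟩
      have heq : π (C r * X ^ (n + 1))
            - (π (C (κ' (c - a * b))) * π X + π (C (κ' (-(a * b ^ 2)))))
          = π (C (κ' a)) * π g
            + (π (C r * X ^ n) - (π (C (κ' a)) * π X + π (C (κ' c)))) * π X := by
        have hmulx : π (C r * X ^ (n + 1)) = π (C r * X ^ n) * π X := by
          rw [← map_mul, show (C r * X ^ n * X : R[X]) = C r * X ^ (n + 1) from by ring]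
        rw [hmulx]
        simp only [map_add, map_mul, map_pow, map_sub, map_neg]
        linear_combination (-(π (C (κ' a)))) * hg2
      rw [heq]
      exact Ideal.add_mem _ (Ideal.mul_mem_left _ _ (Ideal.subset_span rfl))
        (Ideal.mul_mem_right _ _ hs)
  -- counting step
  have step : ∀ i : ℕ, Nat.card (Ideal.span {π g ^ i})
      ≤ Nat.card F ^ 2 * Nat.card (Ideal.span {π g ^ (i + 1)}) := by
    intro i
    have hle : Ideal.span {π g ^ (i + 1)} ≤ Ideal.span {π g ^ i} :=
      Ideal.span_singleton_le_span_singleton.mpr (pow_dvd_pow _ (Nat.le_succ i))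
    have hφmem : ∀ t : F × F × (Ideal.span {π g ^ (i + 1)}),
        (π (C (κ' t.1)) * π X + π (C (κ' t.2.1))) * π g ^ i + (t.2.2 : _)
          ∈ Ideal.span {π g ^ i} := fun t =>
      Ideal.add_mem _ (Ideal.mul_mem_left _ _ (Ideal.subset_span rfl)) (hle t.2.2.2)
    have hsurj : Function.Surjective
        (fun t : F × F × (Ideal.span {π g ^ (i + 1)}) =>
          (⟨_, hφmem t⟩ : Ideal.span {π g ^ i})) := by
      rintro ⟨y, hy⟩
      rw [Ideal.mem_span_singleton] at hy
      obtain ⟨t, ht⟩ := hy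
      obtain ⟨a, c, hs⟩ := span2 t
      rw [Ideal.mem_span_singleton] at hs
      obtain ⟨t', ht'⟩ := hs
      refine ⟨⟨a, c, ⟨π g ^ (i + 1) * t', Ideal.mem_span_singleton.mpr ⟨t', rfl⟩⟩⟩, ?_⟩
      apply Subtype.ext
      show (π (C (κ' a)) * π X + π (C (κ' c))) * π g ^ i + π g ^ (i + 1) * t' = y
      rw [ht]
      linear_combination (-(π g ^ i)) * ht'
    calc Nat.card (Ideal.span {π g ^ i})
        ≤ Nat.card (F × F × (Ideal.span {π g ^ (i + 1)})) :=
          Nat.card_le_card_of_surjective _ hsurj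
      _ = Nat.card F ^ 2 * Nat.card (Ideal.span {π g ^ (i + 1)}) := by
          rw [Nat.card_prod, Nat.card_prod]; ring
  -- base and top of the chain
  have base : Nat.card (Ideal.span {π g ^ 0}) = (Nat.card F ^ 2) ^ (3 * N) := by
    rw [pow_zero, Ideal.span_singleton_one]
    have h1 : Nat.card (⊤ : Ideal (R[X] ⧸ Ideal.span
        {(X : R[X]) ^ (2 * N) + C δ * X ^ N + C (δ ^ 2)}))
        = Nat.card (R[X] ⧸ Ideal.span
        {(X : R[X]) ^ (2 * N) + C δ * X ^ N + C (δ ^ 2)}) :=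
      Nat.card_congr Submodule.topEquiv.toEquiv
    have h2 : Nat.card (R[X] ⧸ Ideal.span
        {(X : R[X]) ^ (2 * N) + C δ * X ^ N + C (δ ^ 2)}) = Nat.card R ^ (2 * N) := by
      have h := adjoinRoot_card hfm
      rw [hdeg] at h
      exact h
    rw [h1, h2, hcard, ← pow_mul, ← pow_mul]
    congr 1
    ring
  have htop : Nat.card (Ideal.span {π g ^ (3 * N)}) = 1 := by
    rw [hG3, Ideal.span_singleton_eq_bot.mpr rfl]
    exact Nat.card_unique
  -- squeeze
  have hFpos : 0 < Nat.card F := Nat.card_pos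
  intro i hi
  have hsq := squeeze (Nat.card F ^ 2) (3 * N) (pow_pos hFpos 2)
    (fun j => Nat.card (Ideal.span {π g ^ j})) base htop step i hi
  exact hsq.trans (pow_mul _ _ _).symm

section RtLemmas

variable (p m : ℕ) [Fact p.Prime]

lemma Rt_finite : Finite (Rt p m 3) := adjoinRoot_finite (monic_X_pow 3)

lemma Rt_nontrivial : Nontrivial (Rt p m 3) :=
  AdjoinRoot.nontrivial ((X : Polynomial (GaloisField p m)) ^ 3) (by simp [degree_X_pow])

lemma Rt_charP : CharP (Rt p m 3) p := by
  have := Rt_nontrivial p m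
  exact charP_of_injective_ringHom (κ p m 3).injective p

lemma Rt_card : Nat.card (Rt p m 3) = Nat.card (GaloisField p m) ^ 3 := by
  have := adjoinRoot_card (R := GaloisField p m) (monic_X_pow 3)
  rw [natDegree_X_pow] at this
  exact this

lemma uRt_cube : (uRt p m 3) ^ 3 = 0 := by
  have h : uRt p m 3 ^ 3 = mkRt p m 3 (X ^ 3) := by simp [uRt, map_pow]
  rw [h, mkRt]
  exact Ideal.Quotient.eq_zero_iff_mem.mpr (Ideal.subset_span rfl)

lemma Rt_repr (r : Rt p m 3) : ∃ c r', r = κ p m 3 c + uRt p m 3 * r' := by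
  obtain ⟨q, rfl⟩ := Ideal.Quotient.mk_surjective (I := Ideal.span
    {(X : Polynomial (GaloisField p m)) ^ 3}) r
  show ∃ c r', mkRt p m 3 q = _
  induction q using Polynomial.induction_on with
  | C a => exact ⟨a, 0, by simp [κ, mkRt]⟩
  | add q1 q2 h1 h2 =>
    obtain ⟨c1, r1, h1⟩ := h1
    obtain ⟨c2, r2, h2⟩ := h2
    exact ⟨c1 + c2, r1 + r2, by rw [map_add, h1, h2, map_add]; ring⟩
  | monomial n a h =>
    obtain ⟨c, r', h⟩ := h
    refine ⟨0, κ p m 3 c + uRt p m 3 * r', ?_⟩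
    have h2 : (C a * X ^ (n + 1) : Polynomial (GaloisField p m)) = C a * X ^ n * X := by ring
    rw [h2, map_mul, h, map_zero, zero_add, mul_comm]
    rfl

lemma Rt_isUnit {c : GaloisField p m} (hc : c ≠ 0) (r' : Rt p m 3) :
    IsUnit (κ p m 3 c + uRt p m 3 * r') := by
  set u := uRt p m 3
  set t := u * r' with ht
  have ht3 : t ^ 3 = 0 := by
    have h := uRt_cube p m
    calc t ^ 3 = u ^ 3 * r' ^ 3 := by rw [ht]; ring
    _ = 0 := by rw [h, zero_mul]
  have h1 : κ p m 3 c * κ p m 3 c⁻¹ = 1 := by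
    rw [← map_mul, mul_inv_cancel₀ hc, map_one]
  refine IsUnit.of_mul_eq_one
    (κ p m 3 c⁻¹ * (1 - t * κ p m 3 c⁻¹ + t ^ 2 * (κ p m 3 c⁻¹) ^ 2)) ?_
  linear_combination (1 - t * κ p m 3 c⁻¹ + t ^ 2 * (κ p m 3 c⁻¹) ^ 2) * h1
    + (κ p m 3 c⁻¹) ^ 3 * ht3

end RtLemmas


/-- Let `p^m ≡ 2 (mod 3)`, let `δ̃ = δ̃₀ + uδ̃₁ + u²δ̃₂ ∈ R³` be a unit with
`δ̃₁ ≠ 0`, and `δ̃_{0,0}^{p^s} = δ̃₀`.  Then for each `0 ≤ i ≤ 3p^s − 1`, the ideal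
`⟨(x² + δ̃_{0,0}x + δ̃_{0,0}²)^i⟩` of `T = R³[x]/⟨x^{2p^s} + δ̃x^{p^s} + δ̃²⟩` has exactly
`(p^{2m})^{3p^s − i}` elements. -/
theorem stmt_19 (p m s : ℕ) [Fact p.Prime] (hm : m ≠ 0)
    (hmod : p ^ m % 3 = 2)
    (δtc : ℕ → GaloisField p m) (hδt0 : δtc 0 ≠ 0) (hδt1 : δtc 1 ≠ 0)
    (δt00 : GaloisField p m) (hδt00 : δt00 ^ p ^ s = δtc 0) :
    ∀ i ≤ 3 * p ^ s - 1,
      Nat.card (Ideal.span {(Ideal.Quotient.mk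
          (Ideal.span {(X : Polynomial (Rt p m 3)) ^ (2 * p ^ s) +
            C (mkRt p m 3 (∑ i ∈ Finset.range 3, C (δtc i) * X ^ i)) * X ^ p ^ s +
            C (mkRt p m 3 (∑ i ∈ Finset.range 3, C (δtc i) * X ^ i) ^ 2)})
          (X ^ 2 + C (κ p m 3 δt00) * X + C (κ p m 3 δt00 ^ 2))) ^ i}) =
        (p ^ (2 * m)) ^ (3 * p ^ s - i) := by
  haveI : Finite (Rt p m 3) := Rt_finite p m
  haveI : Nontrivial (Rt p m 3) := Rt_nontrivial p m
  haveI : CharP (Rt p m 3) p := Rt_charP p m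
  -- p ≠ 3, hence 3 ≠ 0 in F
  have hp3 : p ≠ 3 := by
    rintro rfl
    have h1 : 3 ∣ 3 ^ m := dvd_pow_self 3 hm
    obtain ⟨k, hk⟩ := h1
    omega
  have h3F : (3 : GaloisField p m) ≠ 0 := by
    intro h
    have h4 : ((3 : ℕ) : GaloisField p m) = 0 := by exact_mod_cast h
    have h5 : p ∣ 3 := (CharP.cast_eq_zero_iff _ p 3).mp h4
    exact hp3 ((Nat.prime_dvd_prime_iff_eq Fact.out (by norm_num)).mp h5)
  have hps : p ^ s ≠ 0 := (pow_pos (Fact.out : p.Prime).pos s).ne'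
  have hb : δt00 ≠ 0 := by
    intro h
    exact hδt0 (by rw [← hδt00, h, zero_pow hps])
  have hδ : mkRt p m 3 (∑ i ∈ Finset.range 3, C (δtc i) * X ^ i)
      = κ p m 3 (δt00 ^ p ^ s)
        + uRt p m 3 * (κ p m 3 (δtc 1) + uRt p m 3 * κ p m 3 (δtc 2)) := by
    have hsum : (∑ i ∈ Finset.range 3, C (δtc i) * X ^ i : Polynomial (GaloisField p m))
        = C (δtc 0) + C (δtc 1) * X + C (δtc 2) * X ^ 2 := by
      rw [Finset.sum_range_succ, Finset.sum_range_succ, Finset.sum_range_one]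
      ring
    rw [hsum, map_add, map_add, map_mul, map_mul, map_pow,
      show mkRt p m 3 (C (δtc 0)) = κ p m 3 (δtc 0) from rfl,
      show mkRt p m 3 (C (δtc 1)) = κ p m 3 (δtc 1) from rfl,
      show mkRt p m 3 (C (δtc 2)) = κ p m 3 (δtc 2) from rfl,
      show mkRt p m 3 X = uRt p m 3 from rfl, hδt00]
    ring
  have hw : IsUnit (κ p m 3 (δtc 1) + uRt p m 3 * κ p m 3 (δtc 2)) :=
    Rt_isUnit p m hδt1 _
  have hmain := key_gen (κ p m 3) p s (Rt_card p m) (uRt p m 3) _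
    (uRt_cube p m) hw (Rt_repr p m) (fun c hc r' => Rt_isUnit p m hc r')
    h3F δt00 hb _ hδ
  intro i hi
  have hi' : i ≤ 3 * p ^ s := le_trans hi (Nat.sub_le _ _)
  calc Nat.card (Ideal.span {(Ideal.Quotient.mk
          (Ideal.span {(X : Polynomial (Rt p m 3)) ^ (2 * p ^ s) +
            C (mkRt p m 3 (∑ i ∈ Finset.range 3, C (δtc i) * X ^ i)) * X ^ p ^ s +
            C (mkRt p m 3 (∑ i ∈ Finset.range 3, C (δtc i) * X ^ i) ^ 2)})
          (X ^ 2 + C (κ p m 3 δt00) * X + C (κ p m 3 δt00 ^ 2))) ^ i})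
      = Nat.card (GaloisField p m) ^ (2 * (3 * p ^ s - i)) := hmain i hi'
    _ = (p ^ (2 * m)) ^ (3 * p ^ s - i) := by
        rw [GaloisField.card p m hm, ← pow_mul, ← pow_mul]
        congr 1
        ring
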